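/- Every minimally nonperfectly divisible triangle-free graph contains no clique cutset. -/

import Mathlib

open SimpleGraph

variable {V : Type}

/-- The clique number of the subgraph of `G` induced on `S`. -/
noncomputable def omegaOn (G : SimpleGraph V) (S : Set V) : ℕ :=
  sSup {n | ∃ s : Finset V, ↑s ⊆ S ∧ G.IsNClique n s}

/-- The subgraph of `G` induced on `S` is a perfect graph. -/
def IsPerfectOn (G : SimpleGraph V) (S : Set V) : Prop :=
  ∀ T : Set V, T ⊆ S → (G.induce T).chromaticNumber = (omegaOn G T : ℕ∞)

/-- Every nonempty induced subgraph of `G[S]` admits a perfect division. -/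
def PerfDivOn (G : SimpleGraph V) (S : Set V) : Prop :=
  ∀ H : Set V, H ⊆ S → H.Nonempty →
    ∃ A B : Set V, A ∪ B = H ∧ Disjoint A B ∧
      IsPerfectOn G A ∧ omegaOn G B < omegaOn G H

/-- `G` is minimally nonperfectly divisible. -/
def MNPD (G : SimpleGraph V) : Prop :=
  ¬ PerfDivOn G Set.univ ∧ ∀ S : Set V, S ≠ Set.univ → PerfDivOn G S

/-- The external neighbourhood `N(X)`. -/
def extNbhd (G : SimpleGraph V) (X : Set V) : Set V :=
  {v | v ∉ X ∧ ∃ x ∈ X, G.Adj v x}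

/-! ### Auxiliary lemmas about `omegaOn` -/

lemma omegaOn_bddAbove [Fintype V] (G : SimpleGraph V) (S : Set V) :
    BddAbove {n | ∃ s : Finset V, ↑s ⊆ S ∧ G.IsNClique n s} := by
  refine ⟨Fintype.card V, ?_⟩
  rintro n ⟨s, -, hs⟩
  rw [← hs.2]
  exact (Finset.card_le_card (Finset.subset_univ s)).trans_eq Finset.card_univ

lemma omegaOn_set_nonempty (G : SimpleGraph V) (S : Set V) :
    {n | ∃ s : Finset V, ↑s ⊆ S ∧ G.IsNClique n s}.Nonempty :=
  ⟨0, ∅, by simp, by simp⟩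

lemma le_omegaOn [Fintype V] (G : SimpleGraph V) (S : Set V) {n : ℕ} {s : Finset V}
    (h : ↑s ⊆ S) (hs : G.IsNClique n s) : n ≤ omegaOn G S :=
  le_csSup (omegaOn_bddAbove G S) ⟨s, h, hs⟩

lemma omegaOn_le (G : SimpleGraph V) (S : Set V) {m : ℕ}
    (h : ∀ n (s : Finset V), ↑s ⊆ S → G.IsNClique n s → n ≤ m) : omegaOn G S ≤ m :=
  csSup_le (omegaOn_set_nonempty G S) (by rintro n ⟨s, h1, h2⟩; exact h n s h1 h2)

lemma omegaOn_le_two (G : SimpleGraph V) (S : Set V) (htf : G.CliqueFree 3) :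
    omegaOn G S ≤ 2 := by
  refine omegaOn_le G S fun n s _ hs => ?_
  by_contra hn
  exact (htf.mono (by omega)) s hs

lemma omegaOn_le_one (G : SimpleGraph V) (S : Set V)
    (hst : ∀ u ∈ S, ∀ v ∈ S, ¬ G.Adj u v) : omegaOn G S ≤ 1 := by
  refine omegaOn_le G S fun n s hsub hs => ?_
  by_contra hn
  obtain ⟨a, ha, b, hb, hab⟩ := Finset.one_lt_card.mp (hs.2 ▸ (by omega : 1 < n))
  exact hst a (hsub ha) b (hsub hb) (hs.1 (Finset.mem_coe.mpr ha) (Finset.mem_coe.mpr hb) hab)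

lemma two_le_omegaOn [Fintype V] (G : SimpleGraph V) (S : Set V) {u v : V}
    (hu : u ∈ S) (hv : v ∈ S) (h : G.Adj u v) : 2 ≤ omegaOn G S := by
  classical
  refine le_omegaOn G S (s := ({u, v} : Finset V)) ?_ ?_
  · intro x hx
    rcases Finset.mem_insert.mp (Finset.mem_coe.mp hx) with rfl | hx'
    · exact hu
    · rw [Finset.mem_singleton.mp hx']; exact hv
  · constructor
    · rw [Finset.coe_insert, Finset.coe_singleton]
      exact Set.pairwise_pair.mpr fun _ => ⟨h, h.symm⟩
    · exact Finset.card_pair h.ne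

lemma one_le_omegaOn [Fintype V] (G : SimpleGraph V) (S : Set V) {u : V}
    (hu : u ∈ S) : 1 ≤ omegaOn G S := by
  refine le_omegaOn G S (s := ({u} : Finset V)) ?_ ?_
  · intro x hx
    rw [Finset.mem_singleton.mp (Finset.mem_coe.mp hx)]; exact hu
  · simp

lemma stable_of_omegaOn_lt_two [Fintype V] (G : SimpleGraph V) (S : Set V)
    (h : omegaOn G S < 2) : ∀ u ∈ S, ∀ v ∈ S, ¬ G.Adj u v := by
  intro u hu v hv hadj
  exact absurd (two_le_omegaOn G S hu hv hadj) (by omega)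

/-- Clique number bounds the chromatic number of the induced subgraph. -/
lemma omegaOn_le_chromaticNumber [Fintype V] (G : SimpleGraph V) (T : Set V) :
    (omegaOn G T : ℕ∞) ≤ (G.induce T).chromaticNumber := by
  classical
  obtain ⟨s, hsub, hs⟩ := Nat.sSup_mem (omegaOn_set_nonempty G T) (omegaOn_bddAbove G T)
  set s' : Finset T := s.attach.map
    ⟨fun x => (⟨x.1, hsub x.2⟩ : T),
     fun a b h => Subtype.ext (show (a : V) = b from congrArg Subtype.val h)⟩ with hs'
  have hcard : s'.card = omegaOn G T := by
    rw [hs', Finset.card_map, Finset.card_attach]; exact hs.2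
  have hclique : (G.induce T).IsClique (↑s' : Set T) := by
    intro a ha b hb hab
    simp only [hs', Finset.coe_map, Set.mem_image, Finset.mem_coe,
      Function.Embedding.coeFn_mk, Finset.mem_map, Finset.mem_attach] at ha hb
    obtain ⟨x, hx, rfl⟩ := ha
    obtain ⟨y, hy, rfl⟩ := hb
    have hxy : (x : V) ≠ (y : V) := fun h => hab (Subtype.ext h)
    exact hs.1 (Finset.mem_coe.mpr x.2) (Finset.mem_coe.mpr y.2) hxy
  calc (omegaOn G T : ℕ∞) = (s'.card : ℕ∞) := by rw [hcard]
    _ ≤ (G.induce T).chromaticNumber := hclique.card_le_chromaticNumber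

/-- A graph with a proper 3-colouring is perfect on the vertices of the first two colours. -/
lemma isPerfectOn_of_coloring [Fintype V] (G : SimpleGraph V) (htf : G.CliqueFree 3)
    (c : V → Fin 3) (hc : ∀ u v : V, G.Adj u v → c u ≠ c v) :
    IsPerfectOn G {v | c v ≠ 2} := by
  intro T hT
  refine le_antisymm ?_ (omegaOn_le_chromaticNumber G T)
  set n := omegaOn G T with hn
  have hn2 : n ≤ 2 := omegaOn_le_two G T htf
  rcases Nat.lt_or_ge n 1 with h0 | h1
  · -- n = 0 : T is empty
    have hTe : T = ∅ := by
      by_contra h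
      obtain ⟨t, ht⟩ := Set.nonempty_iff_ne_empty.mpr h
      exact absurd (one_le_omegaOn G T ht) (by omega)
    haveI : IsEmpty T := by rw [hTe]; infer_instance
    rw [chromaticNumber_eq_zero_of_isEmpty]
    exact zero_le
  rcases Nat.lt_or_ge n 2 with h1' | h2
  · -- n = 1 : T is stable
    have hstab := stable_of_omegaOn_lt_two G T h1'
    have hcol : (G.induce T).Colorable 1 := by
      refine ⟨Coloring.mk (fun _ => 0) ?_⟩
      intro a b hab
      exact absurd (show G.Adj a.1 b.1 from hab) (hstab a a.2 b b.2)
    have hone : n = 1 := by omega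
    rw [hone]
    exact_mod_cast hcol.chromaticNumber_le
  · -- n = 2 : use the two remaining colours
    have key : ∀ x y : Fin 3, x ≠ y → x ≠ 2 → y ≠ 2 →
        (if x.val = 0 then (0 : Fin 2) else 1) = (if y.val = 0 then 0 else 1) → False := by
      decide
    have hcol : (G.induce T).Colorable 2 := by
      refine ⟨Coloring.mk (fun v => if (c v.1).val = 0 then 0 else 1) ?_⟩
      intro a b hab heq
      exact key _ _ (hc _ _ hab) (hT a.2) (hT b.2) heq
    have htwo : n = 2 := by omega
    rw [htwo]
    exact_mod_cast hcol.chromaticNumber_le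

/-- A division into a perfect part and a stable part of a triangle-free graph
yields a proper 3-colouring. -/
lemma coloring_of_division [Fintype V] (G : SimpleGraph V) (htf : G.CliqueFree 3)
    (S A B : Set V) (hAB : A ∪ B = S) (hperf : IsPerfectOn G A) (hB : omegaOn G B ≤ 1) :
    ∃ c : V → Fin 3, ∀ u ∈ S, ∀ v ∈ S, G.Adj u v → c u ≠ c v := by
  classical
  have hchrom : (G.induce A).chromaticNumber ≤ (2 : ℕ) := by
    rw [hperf A subset_rfl]
    exact_mod_cast omegaOn_le_two G A htf
  obtain ⟨C2⟩ := chromaticNumber_le_iff_colorable.mp hchrom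
  have hBstab : ∀ u ∈ B, ∀ v ∈ B, ¬ G.Adj u v :=
    stable_of_omegaOn_lt_two G B (by omega)
  have keyne : ∀ x : Fin 2, Fin.castLE (Nat.le_succ 2) x ≠ 2 := by decide
  refine ⟨fun v => if h : v ∈ A then Fin.castLE (Nat.le_succ 2) (C2 ⟨v, h⟩) else 2, ?_⟩
  intro u hu v hv hadj heq
  dsimp only at heq
  have hu' : u ∈ A ∪ B := hAB ▸ hu
  have hv' : v ∈ A ∪ B := hAB ▸ hv
  by_cases hua : u ∈ A <;> by_cases hva : v ∈ A
  · rw [dif_pos hua, dif_pos hva] at heq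
    exact C2.valid (show (G.induce A).Adj ⟨u, hua⟩ ⟨v, hva⟩ from hadj)
      (Fin.castLE_injective _ heq)
  · rw [dif_pos hua, dif_neg hva] at heq
    exact keyne _ heq
  · rw [dif_neg hua, dif_pos hva] at heq
    exact keyne _ heq.symm
  · exact hBstab u (hu'.resolve_left hua) v (hv'.resolve_left hva) hadj

/-- Permute colours to agree on a clique of a triangle-free graph. -/
lemma exists_perm_agree (G : SimpleGraph V) (htf : G.CliqueFree 3) (X : Set V)
    (hX : G.IsClique X) (c1 c2 : V → Fin 3)
    (h1 : ∀ x ∈ X, ∀ y ∈ X, x ≠ y → c1 x ≠ c1 y)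
    (h2 : ∀ x ∈ X, ∀ y ∈ X, x ≠ y → c2 x ≠ c2 y) :
    ∃ σ : Equiv.Perm (Fin 3), ∀ x ∈ X, σ (c2 x) = c1 x := by
  classical
  rcases Set.eq_empty_or_nonempty X with rfl | ⟨x, hx⟩
  · exact ⟨Equiv.refl _, by simp⟩
  by_cases hsing : ∀ z ∈ X, z = x
  · refine ⟨Equiv.swap (c2 x) (c1 x), ?_⟩
    intro z hz
    rw [hsing z hz]
    exact Equiv.swap_apply_left _ _
  · push_neg at hsing
    obtain ⟨y, hy, hyx⟩ := hsing
    have hxy : x ≠ y := Ne.symm hyx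
    have hsmall : ∀ z ∈ X, z = x ∨ z = y := by
      intro z hz
      by_contra hzz
      push_neg at hzz
      obtain ⟨hzx, hzy⟩ := hzz
      have : G.IsNClique 3 {x, y, z} := is3Clique_triple_iff.mpr
        ⟨hX hx hy hxy, hX hx hz (Ne.symm hzx), hX hy hz (Ne.symm hzy)⟩
      exact htf _ this
    have h1ne : c1 x ≠ c1 y := h1 x hx y hy hxy
    have h2ne : c2 x ≠ c2 y := h2 x hx y hy hxy
    set σ1 := Equiv.swap (c2 x) (c1 x) with hσ1
    set d := σ1 (c2 y) with hd
    have e1 : σ1 (c2 x) = c1 x := Equiv.swap_apply_left _ _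
    have hdne : d ≠ c1 x := by
      intro h
      have e2 : σ1 (c2 y) = c1 x := hd ▸ h
      exact h2ne (σ1.injective (e1.trans e2.symm))
    refine ⟨σ1.trans (Equiv.swap d (c1 y)), ?_⟩
    intro z hz
    rcases hsmall z hz with rfl | rfl
    · rw [Equiv.trans_apply, e1]
      exact Equiv.swap_apply_of_ne_of_ne (Ne.symm hdne) h1ne
    · rw [Equiv.trans_apply, ← hd]
      exact Equiv.swap_apply_left _ _

/-- An edge exists between two distinct reachable vertices. -/
lemma exists_adj_of_reachable {G : SimpleGraph V} {u v : V} (h : G.Reachable u v)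
    (hne : u ≠ v) : ∃ x y : V, G.Adj x y := by
  obtain ⟨w⟩ := h
  cases w with
  | nil => exact absurd rfl hne
  | cons h' _ => exact ⟨_, _, h'⟩

theorem stmt_10 [Fintype V] (G : SimpleGraph V) (hG : MNPD G)
    (htf : G.CliqueFree 3) (hc : G.Connected) :
    ¬ ∃ X : Set V, G.IsClique X ∧ ¬ (G.induce Xᶜ).Preconnected := by
  classical
  rintro ⟨X, hX, hdisc⟩
  simp only [Preconnected, not_forall] at hdisc
  obtain ⟨a, b, hnr⟩ := hdisc
  set C : Set V := {v | ∃ h : v ∈ Xᶜ, (G.induce Xᶜ).Reachable a ⟨v, h⟩} with hC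
  set D : Set V := Xᶜ \ C with hD
  have haC : (a : V) ∈ C := ⟨a.2, Reachable.refl _⟩
  have hbD : (b : V) ∈ D := by
    refine ⟨b.2, ?_⟩
    rintro ⟨hb, hr⟩
    exact hnr (by convert hr)
  have hnoedge : ∀ u ∈ C, ∀ v ∈ D, ¬ G.Adj u v := by
    rintro u ⟨hu, hru⟩ v ⟨hv, hvc⟩ hadj
    exact hvc ⟨hv, hru.trans (Adj.reachable (show (G.induce Xᶜ).Adj ⟨u, hu⟩ ⟨v, hv⟩ from hadj))⟩
  have hCDX : C ∪ D ∪ X = Set.univ := by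
    ext v
    simp only [Set.mem_union, Set.mem_univ, iff_true]
    by_cases hv : v ∈ X
    · right; exact hv
    · by_cases hvc : v ∈ C
      · exact Or.inl (Or.inl hvc)
      · exact Or.inl (Or.inr ⟨hv, hvc⟩)
  have hCXne : C ∪ X ≠ Set.univ := by
    intro h
    have : (b : V) ∈ C ∪ X := h ▸ Set.mem_univ _
    rcases this with hb | hb
    · exact hbD.2 hb
    · exact b.2 hb
  have hDXne : D ∪ X ≠ Set.univ := by
    intro h
    have : (a : V) ∈ D ∪ X := h ▸ Set.mem_univ _
    rcases this with ha | ha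
    · exact ha.2 haC
    · exact a.2 ha
  have getcol : ∀ S : Set V, S ≠ Set.univ → S.Nonempty →
      ∃ c : V → Fin 3, ∀ u ∈ S, ∀ v ∈ S, G.Adj u v → c u ≠ c v := by
    intro S hSne hSnonempty
    obtain ⟨A, B, hAB, _, hperf, hlt⟩ := hG.2 S hSne S subset_rfl hSnonempty
    have hB1 : omegaOn G B ≤ 1 := by
      have := omegaOn_le_two G S htf
      omega
    exact coloring_of_division G htf S A B hAB hperf hB1
  obtain ⟨c1, hc1⟩ := getcol (C ∪ X) hCXne ⟨a, Or.inl haC⟩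
  obtain ⟨c2, hc2⟩ := getcol (D ∪ X) hDXne ⟨b, Or.inl hbD⟩
  obtain ⟨σ, hσ⟩ := exists_perm_agree G htf X hX c1 c2
    (fun x hx y hy hne => hc1 x (Or.inr hx) y (Or.inr hy) (hX hx hy hne))
    (fun x hx y hy hne => hc2 x (Or.inr hx) y (Or.inr hy) (hX hx hy hne))
  set c : V → Fin 3 := fun v => if v ∈ D then σ (c2 v) else c1 v with hcdef
  have hcprop : ∀ u v : V, G.Adj u v → c u ≠ c v := by
    intro u v hadj
    have hmemu : u ∈ C ∪ D ∪ X := hCDX ▸ Set.mem_univ u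
    have hmemv : v ∈ C ∪ D ∪ X := hCDX ▸ Set.mem_univ v
    by_cases hud : u ∈ D <;> by_cases hvd : v ∈ D
    · simp only [hcdef, if_pos hud, if_pos hvd]
      intro h
      exact hc2 u (Or.inl hud) v (Or.inl hvd) hadj (σ.injective h)
    · have hvx : v ∈ X := by
        rcases hmemv with (hv | hv) | hv
        · exact (hnoedge v hv u hud hadj.symm).elim
        · exact (hvd hv).elim
        · exact hv
      simp only [hcdef, if_pos hud, if_neg hvd]
      rw [← hσ v hvx]
      intro h
      exact hc2 u (Or.inl hud) v (Or.inr hvx) hadj (σ.injective h)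
    · have hux : u ∈ X := by
        rcases hmemu with (hu | hu) | hu
        · exact (hnoedge u hu v hvd hadj).elim
        · exact (hud hu).elim
        · exact hu
      simp only [hcdef, if_neg hud, if_pos hvd]
      rw [← hσ u hux]
      intro h
      exact hc2 u (Or.inr hux) v (Or.inl hvd) hadj (σ.injective h)
    · have hucx : u ∈ C ∪ X := by
        rcases hmemu with (hu | hu) | hu
        · exact Or.inl hu
        · exact (hud hu).elim
        · exact Or.inr hu
      have hvcx : v ∈ C ∪ X := by
        rcases hmemv with (hv | hv) | hv
        · exact Or.inl hv
        · exact (hvd hv).elim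
        · exact Or.inr hv
      simp only [hcdef, if_neg hud, if_neg hvd]
      exact hc1 u hucx v hvcx hadj
  apply hG.1
  intro H _ hHne
  by_cases hHuniv : H = Set.univ
  · subst hHuniv
    refine ⟨{v | c v ≠ 2}, {v | c v = 2}, ?_, ?_, ?_, ?_⟩
    · ext v; by_cases h : c v = 2 <;> simp [h]
    · rw [Set.disjoint_left]
      intro v hv hv'
      exact hv hv'
    · exact isPerfectOn_of_coloring G htf c hcprop
    · have hstab : omegaOn G {v | c v = 2} ≤ 1 := by
        refine omegaOn_le_one G _ ?_
        intro u hu v hv hadj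
        exact hcprop u v hadj (hu.trans hv.symm)
      have habne : (a : V) ≠ (b : V) := fun h => hnr (Subtype.ext h ▸ Reachable.refl a)
      obtain ⟨x, y, hxy⟩ := exists_adj_of_reachable (hc.preconnected a b) habne
      have h2 : 2 ≤ omegaOn G Set.univ :=
        two_le_omegaOn G _ (Set.mem_univ x) (Set.mem_univ y) hxy
      omega
  · exact hG.2 H hHuniv H subset_rfl hHne
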